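/- (Dirichlet-type integral, Appendix A(i).) Let N ≥ 1, let p = (p_1, …, p_N) be a probability vector with pairwise distinct positive entries, and let α > 0. Then I_p(α) := (N−1)! ∫_{T} (Σ_{j=1}^N p_j λ_j)^α dλ_1 ⋯ dλ_{N−1} = [Γ(N) Γ(α+1) / Γ(α+N)] · Σ_{j=1}^N p_j^{α+N−1} / ∏_{i≠j}(p_j − p_i), where T = {(λ_1,…,λ_{N−1}) ∈ ℝ^{N−1} : λ_j ≥ 0, Σ_{j<N} λ_j ≤ 1} and λ_N := 1 − Σ_{j<N} λ_j. -/

import Mathlib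

open MeasureTheory Real

/-- Shannon entropy of a vector, with the convention `0 * log 0 = 0`. -/
noncomputable def shannonEntropy {N : ℕ} (p : Fin N → ℝ) : ℝ :=
  ∑ i, Real.negMulLog (p i)

/-- Subentropy of a vector (well defined when the entries are pairwise distinct). -/
noncomputable def subentropy {N : ℕ} (p : Fin N → ℝ) : ℝ :=
  -∑ i, p i ^ N * Real.log (p i) / ∏ j ∈ Finset.univ.erase i, (p i - p j)

/-- A matrix is bi-stochastic if it has nonnegative entries and all row and column sums are 1. -/
def IsBistochastic {N : ℕ} (B : Matrix (Fin N) (Fin N) ℝ) : Prop :=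
  (∀ i j, 0 ≤ B i j) ∧ (∀ i, ∑ j, B i j = 1) ∧ (∀ j, ∑ i, B i j = 1)

/-- Parametrization of the probability simplex `Δ_{N-1}` by the solid simplex in `ℝ^{N-1}`:
`x ↦ (x_1, …, x_{N-1}, 1 - ∑_{j<N} x_j)`. -/
noncomputable def simplexMap (N : ℕ) (x : Fin (N - 1) → ℝ) : Fin N → ℝ :=
  fun i => if h : (i : ℕ) < N - 1 then x ⟨i, h⟩ else 1 - ∑ j, x j

/-- The solid simplex `T = {x ∈ ℝ^{N-1} : x_j ≥ 0, ∑_j x_j ≤ 1}`. -/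
def solidSimplex (N : ℕ) : Set (Fin (N - 1) → ℝ) :=
  {x | (∀ j, 0 ≤ x j) ∧ ∑ j, x j ≤ 1}

/-- Integral of a function on the probability simplex with respect to the uniform
probability measure `μ_N`, realized as `(N-1)!` times the Lebesgue integral over the
solid simplex of the parametrized integrand. -/
noncomputable def simplexIntegral (N : ℕ) (f : (Fin N → ℝ) → ℝ) : ℝ :=
  ((N - 1).factorial : ℝ) * ∫ x in solidSimplex N, f (simplexMap N x)

/-- The `N`-th harmonic number `H_N = ∑_{j=1}^N 1/j`. -/
noncomputable def harmonicNum (N : ℕ) : ℝ := ∑ j ∈ Finset.range N, (1 : ℝ) / (j + 1)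

namespace DAux

noncomputable def ext (n : ℕ) (x : Fin n → ℝ) : Fin (n+1) → ℝ := Fin.snoc x (1 - ∑ j, x j)

def S (n : ℕ) : Set (Fin n → ℝ) := {x | (∀ j, 0 ≤ x j) ∧ ∑ j, x j ≤ 1}

noncomputable def lincomb (n : ℕ) (q : Fin (n+1) → ℝ) (x : Fin n → ℝ) : ℝ :=
  ∑ j, q j * ext n x j

@[simp] lemma ext_castSucc (n : ℕ) (x : Fin n → ℝ) (j : Fin n) :
    ext n x (Fin.castSucc j) = x j := Fin.snoc_castSucc _ _ _

@[simp] lemma ext_last (n : ℕ) (x : Fin n → ℝ) :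
    ext n x (Fin.last n) = 1 - ∑ j, x j := Fin.snoc_last _ _

lemma sum_ext (n : ℕ) (x : Fin n → ℝ) : ∑ j, ext n x j = 1 := by
  rw [Fin.sum_univ_castSucc]
  simp

lemma ext_nonneg {n : ℕ} {x : Fin n → ℝ} (hx : x ∈ S n) (j : Fin (n+1)) :
    0 ≤ ext n x j := by
  induction j using Fin.lastCases with
  | last => simp [sub_nonneg, hx.2]
  | cast j => simp [hx.1 j]

lemma ext_le_one {n : ℕ} {x : Fin n → ℝ} (hx : x ∈ S n) (j : Fin (n+1)) :
    ext n x j ≤ 1 := by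
  have h := sum_ext n x
  have : ∀ i, 0 ≤ ext n x i := ext_nonneg hx
  calc ext n x j ≤ ∑ i, ext n x i := Finset.single_le_sum (fun i _ => this i) (Finset.mem_univ j)
  _ = 1 := h

lemma lincomb_pos {n : ℕ} {q : Fin (n+1) → ℝ} (hq : ∀ j, 0 < q j) {x : Fin n → ℝ}
    (hx : x ∈ S n) : 0 < lincomb n q x := by
  have hmin : 0 < Finset.univ.inf' ⟨0, Finset.mem_univ 0⟩ q := by
    exact (Finset.lt_inf'_iff _).2 fun i _ => hq i
  calc (0:ℝ) < Finset.univ.inf' ⟨0, Finset.mem_univ 0⟩ q := hmin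
  _ = Finset.univ.inf' ⟨0, Finset.mem_univ 0⟩ q * ∑ j, ext n x j := by rw [sum_ext]; ring
  _ = ∑ j, Finset.univ.inf' ⟨0, Finset.mem_univ 0⟩ q * ext n x j := by rw [Finset.mul_sum]
  _ ≤ ∑ j, q j * ext n x j := by
      apply Finset.sum_le_sum
      intro i _
      exact mul_le_mul_of_nonneg_right (Finset.inf'_le _ (Finset.mem_univ i)) (ext_nonneg hx i)

lemma lincomb_le {n : ℕ} {q : Fin (n+1) → ℝ} (hq : ∀ j, 0 < q j) {x : Fin n → ℝ}
    (hx : x ∈ S n) : lincomb n q x ≤ ∑ j, q j := by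
  apply Finset.sum_le_sum
  intro i _
  nth_rewrite 2 [← mul_one (q i)]
  exact mul_le_mul_of_nonneg_left (ext_le_one hx i) (hq i).le

lemma continuous_ext (n : ℕ) : Continuous (ext n) := by
  apply continuous_pi
  intro j
  induction j using Fin.lastCases with
  | last => simp only [ext_last]; fun_prop
  | cast j => simp only [ext_castSucc]; fun_prop

lemma continuous_lincomb (n : ℕ) (q : Fin (n+1) → ℝ) : Continuous (lincomb n q) := by
  unfold lincomb
  exact continuous_finset_sum _ fun j _ => continuous_const.mul ((continuous_apply j).comp (continuous_ext n))

lemma continuous_rpow_const {β : ℝ} (hβ : 0 < β) : Continuous (fun b : ℝ => b ^ β) := by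
  rw [continuous_iff_continuousAt]
  intro x
  exact Real.continuousAt_rpow_const x β (Or.inr hβ.le)

lemma isClosed_S (n : ℕ) : IsClosed (S n) := by
  have : S n = (⋂ j, {x : Fin n → ℝ | 0 ≤ x j}) ∩ {x | ∑ j, x j ≤ 1} := by
    ext x; simp [S, Set.mem_iInter]
  rw [this]
  exact IsClosed.inter (isClosed_iInter fun j => isClosed_le (by fun_prop) (by fun_prop))
    (isClosed_le (by fun_prop) (by fun_prop))

lemma isCompact_S (n : ℕ) : IsCompact (S n) := by
  refine IsCompact.of_isClosed_subset (isCompact_Icc (a := (0 : Fin n → ℝ)) (b := 1)) (isClosed_S n) ?_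
  intro x hx
  rw [Set.mem_Icc]
  constructor
  · intro j; exact hx.1 j
  · intro j
    calc x j ≤ ∑ i, x i := Finset.single_le_sum (fun i _ => hx.1 i) (Finset.mem_univ j)
    _ ≤ 1 := hx.2

lemma integrableOn_lincomb_rpow {n : ℕ} (q : Fin (n+1) → ℝ) (β : ℝ) (hβ : 0 < β) :
    IntegrableOn (fun x => lincomb n q x ^ β) (S n) := by
  exact ((continuous_rpow_const hβ).comp (continuous_lincomb n q)).continuousOn.integrableOn_compact
    (isCompact_S n)


/-- inner 1-d integral -/
lemma inner_integral {A c s β : ℝ} (hβ : 0 < β) (hs : 0 ≤ s) (hA : 0 < A)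
    (hAcs : 0 < A + c * s) (hc : c ≠ 0) :
    ∫ t in (0:ℝ)..s, (A + c * t) ^ β
      = ((A + c * s) ^ (β + 1) - A ^ (β + 1)) / (c * (β + 1)) := by
  have hpos : ∀ t ∈ Set.uIcc (0:ℝ) s, 0 < A + c * t := by
    intro t ht
    rw [Set.uIcc_of_le hs, Set.mem_Icc] at ht
    rcases le_or_gt 0 c with h | h
    · nlinarith [ht.1]
    · nlinarith [ht.2]
  have hderiv : ∀ t ∈ Set.uIcc (0:ℝ) s,
      HasDerivAt (fun u => (A + c * u) ^ (β + 1) / (c * (β + 1))) ((A + c * t) ^ β) t := by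
    intro t ht
    have h1 : HasDerivAt (fun u : ℝ => A + c * u) c t := by
      simpa using ((hasDerivAt_id t).const_mul c).const_add A
    have h2 : HasDerivAt (fun y : ℝ => y ^ (β + 1)) ((β + 1) * (A + c * t) ^ β) (A + c * t) := by
      have := Real.hasDerivAt_rpow_const (x := A + c * t) (p := β + 1)
        (Or.inl (hpos t ht).ne')
      simpa using this
    have h3 := (h2.comp t h1)
    have h4 := h3.div_const (c * (β + 1))
    refine h4.congr_deriv ?_
    rw [div_eq_iff (mul_ne_zero hc (by linarith : (0:ℝ) < β + 1).ne')]
    ring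
  have hint : IntervalIntegrable (fun t => (A + c * t) ^ β) volume 0 s := by
    apply Continuous.intervalIntegrable
    have : Continuous (fun b : ℝ => b ^ β) := by
      rw [continuous_iff_continuousAt]
      exact fun x => Real.continuousAt_rpow_const x β (Or.inr hβ.le)
    fun_prop
  rw [intervalIntegral.integral_eq_sub_of_hasDerivAt hderiv hint]
  rw [mul_zero, add_zero, div_sub_div_same]

/-- divided difference step over a finset -/
lemma dd_step {ι : Type*} [DecidableEq ι] (s : Finset ι) (q f : ι → ℝ)
    (hinj : ∀ i ∈ s, ∀ j ∈ s, q i = q j → i = j) {a b : ι} (ha : a ∈ s) (hb : b ∈ s)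
    (hab : a ≠ b) :
    (q a - q b) * ∑ j ∈ s, f j / ∏ i ∈ s.erase j, (q j - q i)
      = (∑ j ∈ s.erase b, f j / ∏ i ∈ (s.erase b).erase j, (q j - q i))
        - ∑ j ∈ s.erase a, f j / ∏ i ∈ (s.erase a).erase j, (q j - q i) := by
  have hne : ∀ j ∈ s, ∀ i ∈ s, i ≠ j → q j - q i ≠ 0 := by
    intro j hj i hi hij
    exact sub_ne_zero.2 fun h => hij (hinj i hi j hj h.symm)
  have hprodne : ∀ j ∈ s, ∀ t ⊆ s.erase j, ∏ i ∈ t, (q j - q i) ≠ 0 := by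
    intro j hj t ht
    exact Finset.prod_ne_zero_iff.2 fun i hi =>
      hne j hj i (Finset.mem_of_mem_erase (ht hi)) (Finset.ne_of_mem_erase (ht hi))
  have key : ∀ j ∈ s,
      (q a - q b) * (f j / ∏ i ∈ s.erase j, (q j - q i))
      = (if j = b then 0 else f j / ∏ i ∈ (s.erase b).erase j, (q j - q i))
        - (if j = a then 0 else f j / ∏ i ∈ (s.erase a).erase j, (q j - q i)) := by
    intro j hj
    by_cases hja : j = a
    · subst hja
      rw [if_neg (by exact hab), if_pos rfl, sub_zero]
      have hbmem : b ∈ s.erase j := Finset.mem_erase.2 ⟨fun h => hab h.symm, hb⟩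
      have hsplit : ∏ i ∈ s.erase j, (q j - q i)
          = (q j - q b) * ∏ i ∈ (s.erase j).erase b, (q j - q i) :=
        (Finset.mul_prod_erase _ _ hbmem).symm
      rw [hsplit, ← mul_div_assoc,
        Finset.erase_right_comm (a := b) (b := j),
        mul_div_mul_left _ _ (hne j hj b hb fun h => hab h.symm)]
    · by_cases hjb : j = b
      · subst hjb
        rw [if_pos rfl, if_neg hja, zero_sub]
        have hamem : a ∈ s.erase j := Finset.mem_erase.2 ⟨fun h => hja h.symm, ha⟩
        have hsplit : ∏ i ∈ s.erase j, (q j - q i)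
            = (q j - q a) * ∏ i ∈ (s.erase j).erase a, (q j - q i) :=
          (Finset.mul_prod_erase _ _ hamem).symm
        have h1 : q j - q a ≠ 0 := hne j hj a ha (Ne.symm hja)
        rw [hsplit, Finset.erase_right_comm (a := a) (b := j)]
        rw [show q a - q j = -(q j - q a) by ring]
        rw [← mul_div_assoc, neg_mul, neg_div,
          mul_div_mul_left _ _ h1]
      · rw [if_neg hjb, if_neg hja]
        have hbmem : b ∈ (s.erase j) := Finset.mem_erase.2 ⟨fun h => hjb h.symm, hb⟩
        have hamem : a ∈ (s.erase j).erase b :=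
          Finset.mem_erase.2 ⟨hab, Finset.mem_erase.2 ⟨fun h => hja h.symm, ha⟩⟩
        have hbmem' : b ∈ (s.erase j).erase a :=
          Finset.mem_erase.2 ⟨fun h => hab h.symm, hbmem⟩
        have hsplit : ∏ i ∈ s.erase j, (q j - q i)
            = (q j - q b) * ((q j - q a) * ∏ i ∈ ((s.erase j).erase b).erase a, (q j - q i)) := by
          rw [← Finset.mul_prod_erase _ _ hbmem, ← Finset.mul_prod_erase _ _ hamem]
        have hsplit1 : ∏ i ∈ (s.erase b).erase j, (q j - q i)
            = (q j - q a) * ∏ i ∈ ((s.erase j).erase b).erase a, (q j - q i) := by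
          rw [Finset.erase_right_comm (a := b) (b := j), ← Finset.mul_prod_erase _ _ hamem]
        have hsplit2 : ∏ i ∈ (s.erase a).erase j, (q j - q i)
            = (q j - q b) * ∏ i ∈ ((s.erase j).erase b).erase a, (q j - q i) := by
          rw [Finset.erase_right_comm (a := a) (b := j), ← Finset.mul_prod_erase _ _ hbmem',
            Finset.erase_right_comm (a := a) (b := b)]
        have hP : ∏ i ∈ ((s.erase j).erase b).erase a, (q j - q i) ≠ 0 := by
          apply hprodne j hj
          intro i hi
          exact Finset.mem_of_mem_erase (Finset.mem_of_mem_erase hi)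
        have h1 : q j - q a ≠ 0 := hne j hj a ha (Ne.symm hja)
        have h2 : q j - q b ≠ 0 := hne j hj b hb (Ne.symm hjb)
        rw [hsplit, hsplit1, hsplit2]
        field_simp
        ring
  rw [Finset.mul_sum, Finset.sum_congr rfl key, Finset.sum_sub_distrib]
  congr 1
  · rw [← Finset.sum_erase (a := b) s (by simp)]
    exact Finset.sum_congr rfl fun j hj => if_neg (Finset.ne_of_mem_erase hj)
  · rw [← Finset.sum_erase (a := a) s (by simp)]
    exact Finset.sum_congr rfl fun j hj => if_neg (Finset.ne_of_mem_erase hj)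


lemma image_succAbove (m : ℕ) (p : Fin (m+1)) :
    Finset.univ.image p.succAbove = Finset.univ.erase p := by
  ext j
  simp only [Finset.mem_image, Finset.mem_erase, Finset.mem_univ, and_true, true_and]
  constructor
  · rintro ⟨i, -, rfl⟩; exact p.succAbove_ne i
  · intro h; exact Fin.exists_succAbove_eq h.symm.symm  -- j ≠ p

lemma sum_ratio_comp {m M : ℕ} (φ : Fin m → Fin M) (hφ : Function.Injective φ)
    (q f : Fin M → ℝ) :
    ∑ j ∈ Finset.univ.image φ, f j / ∏ i ∈ (Finset.univ.image φ).erase j, (q j - q i)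
      = ∑ j : Fin m, f (φ j) / ∏ i ∈ Finset.univ.erase j, (q (φ j) - q (φ i)) := by
  rw [Finset.sum_image (fun x _ y _ h => hφ h)]
  refine Finset.sum_congr rfl fun j _ => ?_
  congr 1
  rw [← Finset.image_erase hφ]
  rw [Finset.prod_image (fun x _ y _ h => hφ h)]

lemma gamma_prod (x : ℝ) (hx : 0 < x) (n : ℕ) :
    Real.Gamma (x + n) = Real.Gamma x * ∏ k ∈ Finset.range n, (x + k) := by
  induction n with
  | zero => simp
  | succ n ih =>
    have : x + (n+1 : ℕ) = (x + n) + 1 := by push_cast; ring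
    rw [this, Real.Gamma_add_one (by positivity), ih, Finset.prod_range_succ]
    ring


theorem key : ∀ (n : ℕ) (q : Fin (n+1) → ℝ), (∀ j, 0 < q j) → Function.Injective q →
    ∀ β : ℝ, 0 < β →
    ∫ x in S n, lincomb n q x ^ β
      = (∏ k ∈ Finset.range n, (β + k + 1))⁻¹
        * ∑ j, q j ^ (β + n) / ∏ i ∈ Finset.univ.erase j, (q j - q i) := by
  intro n
  induction n with
  | zero =>
    intro q hq hinj β hβ
    have hS : S 0 = Set.univ := by
      ext x; simp [S]
    have hconst : ∀ x : Fin 0 → ℝ, lincomb 0 q x ^ β = q 0 ^ β := by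
      intro x
      congr 1
      rw [lincomb, Fin.sum_univ_one,
        show ((0 : Fin 1)) = Fin.last 0 from rfl, ext_last]
      simp
    rw [hS, MeasureTheory.setIntegral_univ]
    simp only [hconst]
    rw [MeasureTheory.integral_const]
    rw [MeasureTheory.volume_pi, measureReal_def, MeasureTheory.Measure.pi_univ]
    have h1 : ∑ j : Fin 1, q j ^ (β + (0:ℕ)) / ∏ i ∈ Finset.univ.erase j, (q j - q i)
        = q 0 ^ β := by
      rw [Fin.sum_univ_one]
      norm_num
    rw [h1]
    simp
  | succ n ih =>
    intro q hq hinj β hβ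
    set a : Fin (n+2) := Fin.castSucc (Fin.last n) with ha_def
    set b : Fin (n+2) := Fin.last (n+1) with hb_def
    have hab : a ≠ b := by
      simp only [ha_def, hb_def, Fin.ext_iff, Fin.val_last, Fin.coe_castSucc, ne_eq]
      omega
    have hc : q a - q b ≠ 0 := sub_ne_zero.2 fun h => hab (hinj h)
    set r₁ : Fin (n+1) → ℝ := q ∘ b.succAbove with hr1_def
    set r₂ : Fin (n+1) → ℝ := q ∘ a.succAbove with hr2_def
    have hr1 : ∀ j : Fin (n+1), r₁ j = q (Fin.castSucc j) := by
      intro j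
      simp only [hr1_def, Function.comp_apply, hb_def, Fin.succAbove_last]
    have hr2c : ∀ j : Fin n, r₂ (Fin.castSucc j) = q (Fin.castSucc (Fin.castSucc j)) := by
      intro j
      simp only [hr2_def, Function.comp_apply]
      congr 1
      apply Fin.succAbove_of_castSucc_lt
      simp only [ha_def, Fin.castSucc_lt_castSucc_iff]
      exact Fin.castSucc_lt_last j
    have hr2l : r₂ (Fin.last n) = q b := by
      simp only [hr2_def, Function.comp_apply]
      congr 1
      rw [Fin.succAbove_of_le_castSucc _ _ (le_refl _), hb_def, Fin.succ_last]
    -- expansion lemmas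
    have L2 : ∀ x' : Fin n → ℝ, lincomb n r₂ x'
        = (∑ j : Fin n, q (Fin.castSucc (Fin.castSucc j)) * x' j)
          + q b * (1 - ∑ j, x' j) := by
      intro x'
      rw [lincomb, Fin.sum_univ_castSucc]
      simp only [ext_castSucc, ext_last, hr2c, hr2l]
    have L1 : ∀ x' : Fin n → ℝ, lincomb n r₁ x'
        = (∑ j : Fin n, q (Fin.castSucc (Fin.castSucc j)) * x' j)
          + q a * (1 - ∑ j, x' j) := by
      intro x'
      rw [lincomb, Fin.sum_univ_castSucc]
      simp only [ext_castSucc, ext_last, hr1]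
      rfl
    have LQ : ∀ (x' : Fin n → ℝ) (t : ℝ), lincomb (n+1) q (Fin.snoc x' t)
        = lincomb n r₂ x' + (q a - q b) * t := by
      intro x' t
      rw [lincomb, Fin.sum_univ_castSucc, Fin.sum_univ_castSucc]
      simp only [ext_castSucc, ext_last, Fin.snoc_castSucc, Fin.snoc_last]
      rw [Fin.sum_univ_castSucc (f := fun j : Fin (n+1) => Fin.snoc x' t j)]
      simp only [Fin.snoc_castSucc, Fin.snoc_last]
      rw [L2 x']
      ring_nf
      simp only [ha_def, hb_def]
      ring
    have L12 : ∀ x' : Fin n → ℝ, lincomb n r₂ x' + (q a - q b) * (1 - ∑ j, x' j)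
        = lincomb n r₁ x' := by
      intro x'
      rw [L1, L2]; ring
    -- membership characterization
    have hmem : ∀ (t : ℝ) (x' : Fin n → ℝ), Fin.snoc x' t ∈ S (n+1)
        ↔ (0 ≤ t ∧ (∀ j, 0 ≤ x' j) ∧ ∑ j, x' j + t ≤ 1) := by
      intro t x'
      constructor
      · rintro ⟨h1, h2⟩
        rw [Fin.sum_univ_castSucc] at h2
        simp only [Fin.snoc_castSucc, Fin.snoc_last] at h2
        exact ⟨by simpa using h1 (Fin.last n), fun j => by simpa using h1 (Fin.castSucc j), h2⟩
      · rintro ⟨h0, h1, h2⟩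
        constructor
        · intro j
          induction j using Fin.lastCases with
          | last => simpa
          | cast j => simpa using h1 j
        · rw [Fin.sum_univ_castSucc]
          simpa
    -- the measurable equivalence splitting off the last coordinate
    set e : (Fin (n+1) → ℝ) ≃ᵐ ℝ × (Fin n → ℝ) :=
      MeasurableEquiv.piFinSuccAbove (fun _ : Fin (n+1) => ℝ) (Fin.last n) with he_def
    have he : MeasurePreserving e.symm volume volume :=
      (volume_preserving_piFinSuccAbove (fun _ : Fin (n+1) => ℝ) (Fin.last n)).symm e
    have hesymm : ∀ y : ℝ × (Fin n → ℝ), e.symm y = Fin.snoc y.2 y.1 := by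
      intro y
      simp only [he_def, MeasurableEquiv.piFinSuccAbove_symm_apply, Fin.insertNthEquiv,
        Equiv.coe_fn_mk, Fin.insertNth_last']
    set U : Set (ℝ × (Fin n → ℝ)) :=
      {y | 0 ≤ y.1 ∧ (∀ j, 0 ≤ y.2 j) ∧ ∑ j, y.2 j + y.1 ≤ 1} with hU_def
    have hpre : e.symm ⁻¹' (S (n+1)) = U := by
      ext y
      rw [Set.mem_preimage, hesymm]
      exact hmem y.1 y.2
    have hUclosed : IsClosed U := by
      have : U = {y : ℝ × (Fin n → ℝ) | 0 ≤ y.1}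
          ∩ ((⋂ j, {y : ℝ × (Fin n → ℝ) | 0 ≤ y.2 j})
            ∩ {y : ℝ × (Fin n → ℝ) | ∑ j, y.2 j + y.1 ≤ 1}) := by
        ext y
        simp only [hU_def, Set.mem_setOf_eq, Set.mem_inter_iff, Set.mem_iInter]
      rw [this]
      refine IsClosed.inter (isClosed_le (by fun_prop) (by fun_prop)) (IsClosed.inter ?_ ?_)
      · exact isClosed_iInter fun j => isClosed_le (by fun_prop) (by fun_prop)
      · exact isClosed_le (Continuous.add
          (continuous_finset_sum _ fun j _ => (continuous_apply j).comp continuous_snd)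
          continuous_fst) (by fun_prop)
    have hUcomp : IsCompact U := by
      refine IsCompact.of_isClosed_subset
        (isCompact_Icc (a := ((0:ℝ), (0 : Fin n → ℝ))) (b := (1, 1))) hUclosed ?_
      rintro ⟨t, x'⟩ ⟨h0, h1, h2⟩
      have hsum0 : (0:ℝ) ≤ ∑ j, x' j := Finset.sum_nonneg fun j _ => h1 j
      rw [Set.mem_Icc]
      constructor
      · exact ⟨h0, h1⟩
      · constructor
        · show t ≤ 1; linarith
        · intro j
          show x' j ≤ 1
          have := Finset.single_le_sum (fun i _ => h1 i) (Finset.mem_univ j)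
          linarith
    have hUmeas : MeasurableSet U := hUclosed.measurableSet
    have hq1 : ∀ j, 0 < r₁ j := fun j => hq _
    have hq2 : ∀ j, 0 < r₂ j := fun j => hq _
    set f₀ : ℝ × (Fin n → ℝ) → ℝ :=
      fun y => (lincomb n r₂ y.2 + (q a - q b) * y.1) ^ β with hf0_def
    have hf₀cont : Continuous f₀ := by
      apply (continuous_rpow_const hβ).comp
      exact ((continuous_lincomb n r₂).comp continuous_snd).add
        (continuous_const.mul continuous_fst)
    have hFint : Integrable (U.indicator f₀) volume := by
      rw [MeasureTheory.integrable_indicator_iff hUmeas]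
      exact hf₀cont.continuousOn.integrableOn_compact hUcomp
    have step1 : ∫ x in S (n+1), lincomb (n+1) q x ^ β
        = ∫ y, U.indicator f₀ y ∂(volume : Measure (ℝ × (Fin n → ℝ))) := by
      rw [← he.setIntegral_preimage_emb (MeasurableEquiv.measurableEmbedding e.symm)
        (fun x => lincomb (n+1) q x ^ β) (S (n+1))]
      rw [hpre, MeasureTheory.integral_indicator hUmeas]
      have : ∀ y : ℝ × (Fin n → ℝ), lincomb (n+1) q (e.symm y) ^ β = f₀ y := by
        intro y
        rw [hesymm y, LQ y.2 y.1]
      simp only [this]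
    have step2 : (∫ y, U.indicator f₀ y ∂(volume : Measure (ℝ × (Fin n → ℝ))))
        = ∫ x' : Fin n → ℝ, ∫ t : ℝ, U.indicator f₀ (t, x') := by
      rw [MeasureTheory.Measure.volume_eq_prod]
      rw [MeasureTheory.Measure.volume_eq_prod] at hFint
      exact MeasureTheory.integral_prod_symm _ hFint
    have hinner : ∀ x' : Fin n → ℝ, (∫ t : ℝ, U.indicator f₀ (t, x'))
        = (S n).indicator (fun x' => ((lincomb n r₁ x') ^ (β+1) - (lincomb n r₂ x') ^ (β+1))
            / ((q a - q b) * (β + 1))) x' := by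
      intro x'
      by_cases hx' : x' ∈ S n
      · have hs0 : (0:ℝ) ≤ 1 - ∑ j, x' j := by
          have := hx'.2; linarith
        have hFx : ∀ t : ℝ, U.indicator f₀ (t, x')
            = (Set.Icc (0:ℝ) (1 - ∑ j, x' j)).indicator
                (fun t => (lincomb n r₂ x' + (q a - q b) * t) ^ β) t := by
          intro t
          by_cases ht : t ∈ Set.Icc (0:ℝ) (1 - ∑ j, x' j)
          · rw [Set.indicator_of_mem ht, Set.indicator_of_mem]
            exact ⟨ht.1, hx'.1, by have := ht.2; linarith⟩
          · rw [Set.indicator_of_notMem ht, Set.indicator_of_notMem]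
            intro hU2
            refine ht ⟨hU2.1, ?_⟩
            have := hU2.2.2
            linarith
        rw [Set.indicator_of_mem hx']
        calc ∫ t : ℝ, U.indicator f₀ (t, x')
            = ∫ t : ℝ, (Set.Icc (0:ℝ) (1 - ∑ j, x' j)).indicator
                (fun t => (lincomb n r₂ x' + (q a - q b) * t) ^ β) t := by
              simp only [hFx]
          _ = ∫ t in Set.Icc (0:ℝ) (1 - ∑ j, x' j),
                (lincomb n r₂ x' + (q a - q b) * t) ^ β :=
              MeasureTheory.integral_indicator measurableSet_Icc
          _ = ∫ t in Set.Ioc (0:ℝ) (1 - ∑ j, x' j),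
                (lincomb n r₂ x' + (q a - q b) * t) ^ β :=
              MeasureTheory.integral_Icc_eq_integral_Ioc
          _ = ∫ t in (0:ℝ)..(1 - ∑ j, x' j),
                (lincomb n r₂ x' + (q a - q b) * t) ^ β :=
              (intervalIntegral.integral_of_le hs0).symm
          _ = ((lincomb n r₂ x' + (q a - q b) * (1 - ∑ j, x' j)) ^ (β+1)
                - (lincomb n r₂ x') ^ (β+1)) / ((q a - q b) * (β+1)) := by
              apply inner_integral hβ hs0 (lincomb_pos hq2 hx') _ hc
              rw [L12 x']
              exact lincomb_pos hq1 hx'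
          _ = ((lincomb n r₁ x') ^ (β+1) - (lincomb n r₂ x') ^ (β+1))
                / ((q a - q b) * (β+1)) := by rw [L12 x']
      · rw [Set.indicator_of_notMem hx']
        have hz : ∀ t : ℝ, U.indicator f₀ (t, x') = 0 := by
          intro t
          apply Set.indicator_of_notMem
          intro hU2
          refine hx' ⟨hU2.2.1, ?_⟩
          have h0 := hU2.1
          have := hU2.2.2
          linarith
        simp only [hz, integral_zero]
    have main : ∫ x in S (n+1), lincomb (n+1) q x ^ β
        = ∫ x' in S n, ((lincomb n r₁ x') ^ (β+1) - (lincomb n r₂ x') ^ (β+1))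
            / ((q a - q b) * (β + 1)) := by
      rw [step1, step2]
      simp only [hinner]
      rw [MeasureTheory.integral_indicator (isClosed_S n).measurableSet]
    have hβ1 : (0:ℝ) < β + 1 := by linarith
    have hinj1 : Function.Injective r₁ := hinj.comp Fin.succAbove_right_injective
    have hinj2 : Function.Injective r₂ := hinj.comp Fin.succAbove_right_injective
    have hint1 := integrableOn_lincomb_rpow r₁ (β+1) hβ1
    have hint2 := integrableOn_lincomb_rpow r₂ (β+1) hβ1
    rw [main]
    have hsplit : ∫ x' in S n, ((lincomb n r₁ x') ^ (β+1) - (lincomb n r₂ x') ^ (β+1))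
            / ((q a - q b) * (β + 1))
        = ((∫ x' in S n, lincomb n r₁ x' ^ (β+1))
            - ∫ x' in S n, lincomb n r₂ x' ^ (β+1)) * ((q a - q b) * (β + 1))⁻¹ := by
      simp only [div_eq_mul_inv]
      rw [MeasureTheory.integral_mul_const, MeasureTheory.integral_sub hint1 hint2]
    rw [hsplit, ih r₁ hq1 hinj1 (β+1) hβ1, ih r₂ hq2 hinj2 (β+1) hβ1]
    have e1 : ∑ j : Fin (n+1), r₁ j ^ (β + 1 + (n:ℝ)) / ∏ i ∈ Finset.univ.erase j, (r₁ j - r₁ i)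
        = ∑ j ∈ Finset.univ.erase b, q j ^ (β + 1 + (n:ℝ))
            / ∏ i ∈ (Finset.univ.erase b).erase j, (q j - q i) := by
      rw [← image_succAbove (n+1) b,
        sum_ratio_comp b.succAbove Fin.succAbove_right_injective q
          (fun j => q j ^ (β + 1 + (n:ℝ)))]
      simp only [hr1_def, Function.comp_apply]
    have e2 : ∑ j : Fin (n+1), r₂ j ^ (β + 1 + (n:ℝ)) / ∏ i ∈ Finset.univ.erase j, (r₂ j - r₂ i)
        = ∑ j ∈ Finset.univ.erase a, q j ^ (β + 1 + (n:ℝ))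
            / ∏ i ∈ (Finset.univ.erase a).erase j, (q j - q i) := by
      rw [← image_succAbove (n+1) a,
        sum_ratio_comp a.succAbove Fin.succAbove_right_injective q
          (fun j => q j ^ (β + 1 + (n:ℝ)))]
      simp only [hr2_def, Function.comp_apply]
    have dd := dd_step (Finset.univ : Finset (Fin (n+2))) q
      (fun j => q j ^ (β + 1 + (n:ℝ))) (fun i _ j _ h => hinj h)
      (Finset.mem_univ a) (Finset.mem_univ b) hab
    have hexp : β + ((n+1:ℕ):ℝ) = β + 1 + (n:ℝ) := by push_cast; ring
    rw [show (β + ((n+1:ℕ):ℝ)) = β + 1 + (n:ℝ) from hexp]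
    have hprodpos : (0:ℝ) < ∏ k ∈ Finset.range n, (β + 1 + (k:ℝ) + 1) :=
      Finset.prod_pos fun k _ => by positivity
    have hprodsucc : ∏ k ∈ Finset.range (n+1), (β + (k:ℝ) + 1)
        = (β + 1) * ∏ k ∈ Finset.range n, (β + 1 + (k:ℝ) + 1) := by
      rw [Finset.prod_range_succ',
        Finset.prod_congr rfl (fun k _ =>
          (by push_cast; ring : (β + (((k:ℕ)+1:ℕ):ℝ) + 1) = β + 1 + (k:ℝ) + 1))]
      push_cast
      ring
    rw [hprodsucc, e1, e2, ← mul_sub, ← dd]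
    have hβ1' : (β+1) ≠ 0 := hβ1.ne'
    have hP' : (∏ k ∈ Finset.range n, (β + 1 + (k:ℝ) + 1)) ≠ 0 := hprodpos.ne'
    field_simp


end DAux

/-- Appendix A(i): the Dirichlet-type integral
`I_p(α) = (N-1)! ∫_T (∑_j p_j λ_j)^α dλ` equals
`Γ(N)Γ(α+1)/Γ(α+N) · ∑_j p_j^{α+N-1}/∏_{i≠j}(p_j - p_i)`. -/
theorem dirichlet_integral (N : ℕ) (hN : 1 ≤ N) (p : Fin N → ℝ)
    (hp : ∀ j, 0 < p j) (hsum : ∑ j, p j = 1)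
    (hdist : ∀ j k : Fin N, j ≠ k → p j ≠ p k) (α : ℝ) (hα : 0 < α) :
    simplexIntegral N (fun lam => (∑ j, p j * lam j) ^ α) =
      (Real.Gamma N * Real.Gamma (α + 1) / Real.Gamma (α + N)) *
        ∑ j, p j ^ (α + N - 1) / ∏ i ∈ Finset.univ.erase j, (p j - p i) := by
  obtain ⟨n, rfl⟩ : ∃ n, N = n + 1 := ⟨N - 1, (Nat.succ_pred_eq_of_pos hN).symm⟩
  have hinjp : Function.Injective p := by
    intro j k h
    by_contra hne
    exact hdist j k hne h
  have hmap : ∀ x : Fin n → ℝ, simplexMap (n+1) x = DAux.ext n x := by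
    intro x
    funext i
    induction i using Fin.lastCases with
    | last =>
      rw [DAux.ext_last]
      simp [simplexMap]
    | cast j =>
      rw [DAux.ext_castSucc]
      simp only [simplexMap, Fin.coe_castSucc]
      rw [dif_pos (by simpa using j.isLt)]
      exact congrArg x (Fin.ext rfl)
  have hset : solidSimplex (n+1) = DAux.S n := rfl
  have heq : ∀ x : Fin n → ℝ, (∑ j, p j * (simplexMap (n+1) x) j) = DAux.lincomb n p x := by
    intro x
    rw [hmap]
    rfl
  have hint : (∫ x in solidSimplex (n+1), (∑ j, p j * (simplexMap (n+1) x) j) ^ α)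
      = ∫ x in DAux.S n, DAux.lincomb n p x ^ α := by
    rw [hset]
    simp only [heq]
    rfl
  simp only [simplexIntegral]
  rw [hint, DAux.key n p hp hinjp α hα]
  -- Gamma computations
  have hG1 : Real.Gamma (((n+1:ℕ)):ℝ) = (n.factorial : ℝ) := by
    rw [show (((n+1:ℕ)):ℝ) = (n:ℝ) + 1 by push_cast; ring, Real.Gamma_nat_eq_factorial]
  have hG2 : Real.Gamma (α + ((n+1:ℕ):ℝ))
      = Real.Gamma (α + 1) * ∏ k ∈ Finset.range n, (α + 1 + k) := by
    rw [show (α + ((n+1:ℕ):ℝ)) = (α + 1) + (n:ℕ) by push_cast; ring]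
    exact DAux.gamma_prod (α+1) (by linarith) n
  have hGpos : 0 < Real.Gamma (α + 1) := Real.Gamma_pos_of_pos (by linarith)
  have hPpos : (0:ℝ) < ∏ k ∈ Finset.range n, (α + 1 + k) :=
    Finset.prod_pos fun k _ => by positivity
  have hexp : ∀ j : Fin (n+1), p j ^ (α + ((n+1:ℕ):ℝ) - 1) = p j ^ (α + (n:ℝ)) := by
    intro j
    congr 1
    push_cast
    ring
  simp only [hexp]
  have hprodeq : ∏ k ∈ Finset.range n, (α + (k:ℝ) + 1) = ∏ k ∈ Finset.range n, (α + 1 + (k:ℝ)) :=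
    Finset.prod_congr rfl fun k _ => by ring
  rw [hG1, hG2, hprodeq]
  have hfact : (((n+1)-1).factorial : ℝ) = (n.factorial : ℝ) := by norm_num
  rw [hfact]
  field_simp
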